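/- Let H be a Hilbert space, D a dense subset of H, and (U_n) a sequence of unitary operators on H such that for all φ, ψ ∈ D, ⟨φ, (1 - U_n* U_m) ψ⟩ → 0 and ⟨φ, (1 - U_n U_m*) ψ⟩ → 0 as min(n,m) → ∞. Then there exists a unitary operator U on H such that U_n → U in the strong operator topology. -/

import Mathlib

open Filter ContinuousLinearMap
open scoped InnerProductSpace

private lemma cauchySeq_of_inner_tendsto {H : Type*} [NormedAddCommGroup H]
    [InnerProductSpace ℂ H] {v : ℕ → H} {c : ℂ} (hc : (starRingEnd ℂ) c = c)
    (hself : ∀ n, (inner ℂ (v n) (v n) : ℂ) = c)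
    (h : Tendsto (fun p : ℕ × ℕ => (inner ℂ (v p.1) (v p.2) : ℂ)) (atTop ×ˢ atTop) (nhds c)) :
    CauchySeq v := by
  have hswapmap : Tendsto (Prod.swap : ℕ × ℕ → ℕ × ℕ) (atTop ×ˢ atTop) (atTop ×ˢ atTop) :=
    tendsto_snd.prodMk tendsto_fst
  have hswap : Tendsto (fun p : ℕ × ℕ => (inner ℂ (v p.2) (v p.1) : ℂ)) (atTop ×ˢ atTop)
      (nhds c) := h.comp hswapmap
  have h0 : Tendsto (fun p : ℕ × ℕ =>
      ((inner ℂ (v p.1) (v p.1) : ℂ) - inner ℂ (v p.1) (v p.2) - inner ℂ (v p.2) (v p.1)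
        + inner ℂ (v p.2) (v p.2))) (atTop ×ˢ atTop) (nhds 0) := by
    have hh : Tendsto (fun p : ℕ × ℕ =>
        c - (inner ℂ (v p.1) (v p.2) : ℂ) - (inner ℂ (v p.2) (v p.1) : ℂ) + c)
        (atTop ×ˢ atTop) (nhds (c - c - c + c)) :=
      ((tendsto_const_nhds.sub h).sub hswap).add tendsto_const_nhds
    have hz : c - c - c + c = 0 := by ring
    rw [hz] at hh
    exact hh.congr fun p => by rw [hself, hself]
  have hinner : Tendsto (fun p : ℕ × ℕ =>
      (inner ℂ (v p.1 - v p.2) (v p.1 - v p.2) : ℂ)) (atTop ×ˢ atTop) (nhds 0) := by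
    refine h0.congr fun p => (inner_sub_sub_self _ _).symm
  have hnorm2 : Tendsto (fun p : ℕ × ℕ => ‖v p.1 - v p.2‖ * ‖v p.1 - v p.2‖)
      (atTop ×ˢ atTop) (nhds 0) := by
    have := hinner.norm
    simp only [norm_zero] at this
    refine this.congr fun p => ?_
    rw [inner_self_eq_norm_sq_to_K]
    simp [Complex.norm_real, sq, abs_of_nonneg (norm_nonneg _)]
  have hnorm : Tendsto (fun p : ℕ × ℕ => ‖v p.1 - v p.2‖) (atTop ×ˢ atTop) (nhds 0) := by
    have h' := (Real.continuous_sqrt.tendsto 0).comp hnorm2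
    simp only [Real.sqrt_zero] at h'
    refine h'.congr fun p => ?_
    exact Real.sqrt_mul_self (norm_nonneg _)
  rw [cauchySeq_iff_tendsto_dist_atTop_0, ← prod_atTop_atTop_eq]
  exact hnorm.congr fun p => (dist_eq_norm _ _).symm

private lemma cauchySeq_of_dense {H : Type*} [NormedAddCommGroup H] [InnerProductSpace ℂ H]
    (D : Set H) (hD : Dense D) (V : ℕ → H →L[ℂ] H) (hiso : ∀ n (x : H), ‖V n x‖ = ‖x‖)
    (hC : ∀ ψ ∈ D, CauchySeq fun n => V n ψ) (ψ : H) :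
    CauchySeq fun n => V n ψ := by
  rw [Metric.cauchySeq_iff]
  intro ε hε
  obtain ⟨φ, hφD, hφ⟩ := hD.exists_dist_lt ψ (by positivity : (0:ℝ) < ε/3)
  obtain ⟨N, hN⟩ := Metric.cauchySeq_iff.mp (hC φ hφD) (ε/3) (by positivity)
  refine ⟨N, fun m hm n hn => ?_⟩
  have key : ∀ k, dist (V k ψ) (V k φ) = dist ψ φ := fun k => by
    rw [dist_eq_norm, dist_eq_norm, ← map_sub, hiso]
  calc dist (V m ψ) (V n ψ)
      ≤ dist (V m ψ) (V m φ) + dist (V m φ) (V n φ) + dist (V n φ) (V n ψ) :=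
        dist_triangle4 _ _ _ _
    _ < ε := by
        have h1 := key m
        have h2 := hN m hm n hn
        have h3 : dist (V n φ) (V n ψ) = dist ψ φ := by rw [dist_comm]; exact key n
        rw [h1, h3]
        linarith

theorem stmt_0 {H : Type*} [NormedAddCommGroup H] [InnerProductSpace ℂ H] [CompleteSpace H]
    (D : Set H) (hD : Dense D) (U : ℕ → H →L[ℂ] H)
    (hU : ∀ n, U n ∈ unitary (H →L[ℂ] H))
    (h1 : ∀ φ ∈ D, ∀ ψ ∈ D,
      Tendsto (fun p : ℕ × ℕ =>
          (inner ℂ φ (ψ - (ContinuousLinearMap.adjoint (U p.1)) ((U p.2) ψ)) : ℂ))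
        (atTop ×ˢ atTop) (nhds 0))
    (h2 : ∀ φ ∈ D, ∀ ψ ∈ D,
      Tendsto (fun p : ℕ × ℕ =>
          (inner ℂ φ (ψ - (U p.1) ((ContinuousLinearMap.adjoint (U p.2)) ψ)) : ℂ))
        (atTop ×ˢ atTop) (nhds 0)) :
    ∃ U₀ : H →L[ℂ] H, U₀ ∈ unitary (H →L[ℂ] H) ∧
      ∀ ψ : H, Tendsto (fun n => (U n) ψ) atTop (nhds (U₀ ψ)) := by
  -- basic consequences of unitarity
  have hsU : ∀ n (x : H), ContinuousLinearMap.adjoint (U n) ((U n) x) = x := by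
    intro n x
    have ha := (Unitary.mem_iff.mp (hU n)).1
    have := ContinuousLinearMap.ext_iff.mp ha x
    simpa [ContinuousLinearMap.mul_apply, ContinuousLinearMap.one_apply,
      ContinuousLinearMap.star_eq_adjoint] using this
  have hsU' : ∀ n (x : H), (U n) (ContinuousLinearMap.adjoint (U n) x) = x := by
    intro n x
    have ha := (Unitary.mem_iff.mp (hU n)).2
    have := ContinuousLinearMap.ext_iff.mp ha x
    simpa [ContinuousLinearMap.mul_apply, ContinuousLinearMap.one_apply,
      ContinuousLinearMap.star_eq_adjoint] using this
  have norm_of_inner : ∀ x y : H, (inner ℂ x x : ℂ) = inner ℂ y y → ‖x‖ = ‖y‖ := by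
    intro x y h
    rw [inner_self_eq_norm_sq_to_K, inner_self_eq_norm_sq_to_K] at h
    have h' : ‖x‖ ^ 2 = ‖y‖ ^ 2 := by exact_mod_cast h
    have := congrArg Real.sqrt h'
    rwa [Real.sqrt_sq (norm_nonneg _), Real.sqrt_sq (norm_nonneg _)] at this
  have hisoU : ∀ n (x : H), ‖(U n) x‖ = ‖x‖ := by
    intro n x
    refine norm_of_inner _ _ ?_
    rw [← ContinuousLinearMap.adjoint_inner_left, hsU]
  have hisoA : ∀ n (x : H), ‖ContinuousLinearMap.adjoint (U n) x‖ = ‖x‖ := by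
    intro n x
    refine norm_of_inner _ _ ?_
    rw [ContinuousLinearMap.adjoint_inner_left, hsU']
  -- Cauchy on D for U
  have hCU : ∀ ψ, CauchySeq fun n => (U n) ψ := by
    refine cauchySeq_of_dense D hD U hisoU (fun ψ hψ => ?_)
    refine cauchySeq_of_inner_tendsto (c := (inner ℂ ψ ψ : ℂ)) (inner_conj_symm ψ ψ) ?_ ?_
    · intro n
      rw [← ContinuousLinearMap.adjoint_inner_right, hsU]
    · have h := h1 ψ hψ ψ hψ
      have := (tendsto_const_nhds : Tendsto (fun _ : ℕ × ℕ => (inner ℂ ψ ψ : ℂ)) _ _).sub h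
      simp only [sub_zero] at this
      refine this.congr fun p => ?_
      rw [inner_sub_right, ContinuousLinearMap.adjoint_inner_right]
      ring
  have hCA : ∀ ψ, CauchySeq fun n => ContinuousLinearMap.adjoint (U n) ψ := by
    refine cauchySeq_of_dense D hD (fun n => ContinuousLinearMap.adjoint (U n)) hisoA
      (fun ψ hψ => ?_)
    refine cauchySeq_of_inner_tendsto (c := (inner ℂ ψ ψ : ℂ)) (inner_conj_symm ψ ψ) ?_ ?_
    · intro n
      rw [ContinuousLinearMap.adjoint_inner_left, hsU']
    · have h := h2 ψ hψ ψ hψ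
      have := (tendsto_const_nhds : Tendsto (fun _ : ℕ × ℕ => (inner ℂ ψ ψ : ℂ)) _ _).sub h
      simp only [sub_zero] at this
      refine this.congr fun p => ?_
      rw [inner_sub_right, ← ContinuousLinearMap.adjoint_inner_left]
      ring
  -- pointwise limits
  have hexU : ∀ ψ : H, ∃ x, Tendsto (fun n => (U n) ψ) atTop (nhds x) :=
    fun ψ => cauchySeq_tendsto_of_complete (hCU ψ)
  have hexA : ∀ ψ : H, ∃ x, Tendsto (fun n => ContinuousLinearMap.adjoint (U n) ψ) atTop
      (nhds x) := fun ψ => cauchySeq_tendsto_of_complete (hCA ψ)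
  choose f hf using hexU
  choose g hg using hexA
  -- build continuous linear maps
  have hfadd : ∀ x y, f (x + y) = f x + f y := by
    intro x y
    exact tendsto_nhds_unique (hf (x + y)) (by simpa [map_add] using (hf x).add (hf y))
  have hfsmul : ∀ (c : ℂ) x, f (c • x) = c • f x := by
    intro c x
    exact tendsto_nhds_unique (hf (c • x)) (by simpa [map_smul] using (hf x).const_smul c)
  have hfnorm : ∀ x, ‖f x‖ = ‖x‖ := by
    intro x
    refine tendsto_nhds_unique ((hf x).norm) ?_
    simpa [hisoU] using (tendsto_const_nhds : Tendsto (fun _ : ℕ => ‖x‖) atTop (nhds ‖x‖))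
  have hgadd : ∀ x y, g (x + y) = g x + g y := by
    intro x y
    exact tendsto_nhds_unique (hg (x + y)) (by simpa [map_add] using (hg x).add (hg y))
  have hgsmul : ∀ (c : ℂ) x, g (c • x) = c • g x := by
    intro c x
    exact tendsto_nhds_unique (hg (c • x)) (by simpa [map_smul] using (hg x).const_smul c)
  have hgnorm : ∀ x, ‖g x‖ = ‖x‖ := by
    intro x
    refine tendsto_nhds_unique ((hg x).norm) ?_
    simpa [hisoA] using (tendsto_const_nhds : Tendsto (fun _ : ℕ => ‖x‖) atTop (nhds ‖x‖))
  let U₀ : H →L[ℂ] H := LinearMap.mkContinuous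
    { toFun := f, map_add' := hfadd, map_smul' := hfsmul } 1
    (fun x => by show ‖f x‖ ≤ 1 * ‖x‖; exact le_of_eq (by rw [one_mul, hfnorm]))
  let V₀ : H →L[ℂ] H := LinearMap.mkContinuous
    { toFun := g, map_add' := hgadd, map_smul' := hgsmul } 1
    (fun x => by show ‖g x‖ ≤ 1 * ‖x‖; exact le_of_eq (by rw [one_mul, hgnorm]))
  have hU₀ : ∀ x, U₀ x = f x := fun _ => rfl
  have hV₀ : ∀ x, V₀ x = g x := fun _ => rfl
  -- adjoint of U₀ is V₀
  have hadj : ContinuousLinearMap.adjoint U₀ = V₀ := by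
    ext x
    refine ext_inner_right ℂ fun y => ?_
    rw [ContinuousLinearMap.adjoint_inner_left, hV₀, hU₀]
    have t1 : Tendsto (fun n => (inner ℂ x ((U n) y) : ℂ)) atTop (nhds (inner ℂ x (f y))) :=
      Filter.Tendsto.inner (𝕜 := ℂ) (tendsto_const_nhds : Tendsto (fun _ : ℕ => x) atTop (nhds x)) (hf y)
    have t2 : Tendsto (fun n => (inner ℂ x ((U n) y) : ℂ)) atTop (nhds (inner ℂ (g x) y)) := by
      have := Filter.Tendsto.inner (𝕜 := ℂ) (hg x) (tendsto_const_nhds : Tendsto (fun _ : ℕ => y) atTop (nhds y))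
      refine this.congr fun n => ?_
      rw [ContinuousLinearMap.adjoint_inner_left]
    exact tendsto_nhds_unique t1 t2
  -- V₀ ∘ U₀ = id and U₀ ∘ V₀ = id
  have hVU : ∀ ψ, V₀ (U₀ ψ) = ψ := by
    intro ψ
    have t1 : Tendsto (fun n => ContinuousLinearMap.adjoint (U n) (U₀ ψ)) atTop
        (nhds (V₀ (U₀ ψ))) := hg (U₀ ψ)
    have t2 : Tendsto (fun n => ContinuousLinearMap.adjoint (U n) (U₀ ψ)) atTop (nhds ψ) := by
      rw [tendsto_iff_norm_sub_tendsto_zero]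
      have heq : ∀ n, ‖ContinuousLinearMap.adjoint (U n) (U₀ ψ) - ψ‖ = ‖U₀ ψ - (U n) ψ‖ := by
        intro n
        have e : ContinuousLinearMap.adjoint (U n) (U₀ ψ) - ψ
            = ContinuousLinearMap.adjoint (U n) (U₀ ψ - (U n) ψ) := by
          rw [map_sub, hsU]
        rw [e, hisoA]
      simp only [heq]
      have hnf := tendsto_iff_norm_sub_tendsto_zero.mp (hf ψ)
      refine hnf.congr fun n => ?_
      rw [norm_sub_rev, hU₀]
    exact tendsto_nhds_unique t1 t2
  have hUV : ∀ ψ, U₀ (V₀ ψ) = ψ := by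
    intro ψ
    have t1 : Tendsto (fun n => (U n) (V₀ ψ)) atTop (nhds (U₀ (V₀ ψ))) := hf (V₀ ψ)
    have t2 : Tendsto (fun n => (U n) (V₀ ψ)) atTop (nhds ψ) := by
      rw [tendsto_iff_norm_sub_tendsto_zero]
      have heq : ∀ n, ‖(U n) (V₀ ψ) - ψ‖ = ‖V₀ ψ - ContinuousLinearMap.adjoint (U n) ψ‖ := by
        intro n
        have e : (U n) (V₀ ψ) - ψ = (U n) (V₀ ψ - ContinuousLinearMap.adjoint (U n) ψ) := by
          rw [map_sub, hsU']
        rw [e, hisoU]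
      simp only [heq]
      have hng := tendsto_iff_norm_sub_tendsto_zero.mp (hg ψ)
      refine hng.congr fun n => ?_
      rw [norm_sub_rev, hV₀]
    exact tendsto_nhds_unique t1 t2
  refine ⟨U₀, ?_, fun ψ => hf ψ⟩
  rw [Unitary.mem_iff]
  constructor
  · ext ψ
    simp only [ContinuousLinearMap.mul_apply, ContinuousLinearMap.one_apply,
      ContinuousLinearMap.star_eq_adjoint, hadj]
    exact hVU ψ
  · ext ψ
    simp only [ContinuousLinearMap.mul_apply, ContinuousLinearMap.one_apply,
      ContinuousLinearMap.star_eq_adjoint, hadj]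
    exact hUV ψ
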